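/- Let F ⊆ ℝⁿ be non-empty and a > 0. Set O := {x ∈ ℝⁿ : 0 < d(x,F) ≤ a·m(x)} and O' := {x ∈ ℝⁿ : 0 < d(x,F) < 2a·m(x)}. Then γ(O') ≤ C γ(O), where C depends only on a and the dimension n. -/

import Mathlib

open MeasureTheory Metric Set
open scoped ENNReal NNReal BigOperators

noncomputable section

/-- The gaussian measure `dγ(x) = (2π)^{-n/2} exp(-|x|²/2) dx` on `ℝⁿ`. -/
def gaussMeasure (n : ℕ) : Measure (EuclideanSpace ℝ (Fin n)) :=
  volume.withDensity fun x =>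
    ENNReal.ofReal ((2 * Real.pi) ^ (-(n : ℝ) / 2) * Real.exp (-‖x‖ ^ 2 / 2))

/-- `m(x) = min {1, 1/‖x‖}`. -/
def mfun {n : ℕ} (x : EuclideanSpace ℝ (Fin n)) : ℝ :=
  if ‖x‖ ≤ 1 then 1 else ‖x‖⁻¹

/-- Ornstein–Uhlenbeck (Mehler) semigroup `e^{-tL} u (x)`. -/
def mehler (n : ℕ) (u : EuclideanSpace ℝ (Fin n) → ℝ) (t : ℝ)
    (x : EuclideanSpace ℝ (Fin n)) : ℝ :=
  ∫ y, u (Real.exp (-t) • x + Real.sqrt (1 - Real.exp (-2 * t)) • y) ∂gaussMeasure n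

/-- The gaussian conical square function `S_a u (x)`. -/
def Sfun (n : ℕ) (a : ℝ) (u : EuclideanSpace ℝ (Fin n) → ℝ)
    (x : EuclideanSpace ℝ (Fin n)) : ℝ≥0∞ :=
  (∫⁻ t in Set.Ioo (0 : ℝ) (a * mfun x),
      (∫⁻ y in ball x t,
        (gaussMeasure n (ball y t))⁻¹ *
          ENNReal.ofReal ((t * ‖fderiv ℝ (mehler n u (t ^ 2)) y‖) ^ 2) ∂gaussMeasure n) /
        ENNReal.ofReal t) ^ (1 / 2 : ℝ)

/-- The gaussian non-tangential maximal function `T*_{(A,a)} u (x)`. -/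
def Tstar (n : ℕ) (A a : ℝ) (u : EuclideanSpace ℝ (Fin n) → ℝ)
    (x : EuclideanSpace ℝ (Fin n)) : ℝ≥0∞ :=
  ⨆ (y : EuclideanSpace ℝ (Fin n)) (t : ℝ) (_ : dist y x < A * t) (_ : 0 < t)
      (_ : t < a * mfun x),
    ((gaussMeasure n (ball y (A * t)))⁻¹ *
        ∫⁻ z in ball y (A * t), ENNReal.ofReal ((mehler n u (t ^ 2) z) ^ 2) ∂gaussMeasure n) ^
      (1 / 2 : ℝ)

/-- The admissible (gaussian) Hardy–Littlewood maximal function `M*_a f (x)`. -/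
def Mstar (n : ℕ) (a : ℝ) (f : EuclideanSpace ℝ (Fin n) → ℝ)
    (x : EuclideanSpace ℝ (Fin n)) : ℝ≥0∞ :=
  ⨆ (r : ℝ) (_ : 0 < r) (_ : r ≤ a * mfun x),
    (gaussMeasure n (ball x r))⁻¹ *
      ∫⁻ y in ball x r, ENNReal.ofReal |f y| ∂gaussMeasure n

/-- The admissible cone `Γ^{(A,a)}_x(γ)`. -/
def cone (n : ℕ) (A a : ℝ) (x : EuclideanSpace ℝ (Fin n)) :
    Set (EuclideanSpace ℝ (Fin n) × ℝ) :=
  {p | dist p.1 x < A * p.2 ∧ 0 < p.2 ∧ p.2 < a * mfun x}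

/-- The modified admissible cone `Γ̃^{(A,a)}_x(γ)`. -/
def coneT (n : ℕ) (A a : ℝ) (x : EuclideanSpace ℝ (Fin n)) :
    Set (EuclideanSpace ℝ (Fin n) × ℝ) :=
  {p | dist p.1 x < A * p.2 ∧ 0 < p.2 ∧ p.2 < a * mfun p.1}

/-- The dyadic cube `2^{-k}(v + [0,1)ⁿ)` of scale `k`. -/
def dyadicCube (n k : ℕ) (v : Fin n → ℤ) : Set (EuclideanSpace ℝ (Fin n)) :=
  {x | ∀ i, x i ∈ Set.Ico ((2 : ℝ) ^ (-(k : ℤ)) * v i) ((2 : ℝ) ^ (-(k : ℤ)) * (v i + 1))}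

/-- The centre of the dyadic cube `2^{-k}(v + [0,1)ⁿ)`. -/
def cubeCenter (n k : ℕ) (v : Fin n → ℤ) : EuclideanSpace ℝ (Fin n) :=
  WithLp.toLp 2 (fun i => (2 : ℝ) ^ (-(k : ℤ)) * (v i + 1 / 2))

/-- The layers `L_0 = [-1,1)ⁿ`, `L_l = [-2^l,2^l)ⁿ \ [-2^{l-1},2^{l-1})ⁿ`. -/
def layer (n : ℕ) : ℕ → Set (EuclideanSpace ℝ (Fin n))
  | 0 => {x | ∀ i, x i ∈ Set.Ico (-1 : ℝ) 1}
  | (l + 1) =>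
      {x | ∀ i, x i ∈ Set.Ico (-(2 : ℝ) ^ (l + 1)) ((2 : ℝ) ^ (l + 1))} \
        {x | ∀ i, x i ∈ Set.Ico (-(2 : ℝ) ^ l) ((2 : ℝ) ^ l)}

/-- The cube `α ∘ Q` with the same centre as `Q = 2^{-k}(v + [0,1)ⁿ)` and `α` times
its side-length. -/
def scaledCube (n k : ℕ) (v : Fin n → ℤ) (α : ℝ) : Set (EuclideanSpace ℝ (Fin n)) :=
  {x | ∀ i, x i ∈ Set.Ico (cubeCenter n k v i - α * (2 : ℝ) ^ (-(k : ℤ)) / 2)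
      (cubeCenter n k v i + α * (2 : ℝ) ^ (-(k : ℤ)) / 2)}

/-- The Ornstein–Uhlenbeck operator `Lf(x) = -Δf(x) + x·∇f(x)`. -/
def OU (n : ℕ) (f : EuclideanSpace ℝ (Fin n) → ℂ) (x : EuclideanSpace ℝ (Fin n)) : ℂ :=
  -(∑ i : Fin n, iteratedFDeriv ℝ 2 f x ![EuclideanSpace.single i 1, EuclideanSpace.single i 1]) +
    fderiv ℝ f x x


set_option maxHeartbeats 1000000

lemma gaussMeasure_ball_le {n : ℕ} {a : ℝ} (ha : 0 < a) (x z : EuclideanSpace ℝ (Fin n))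
    {r ρ : ℝ} (hρ : 0 < ρ) (hrρ : r = 72 * (1 + 5*a) * ρ)
    (hsub : ball z ρ ⊆ ball x r) (hrx : r * ‖x‖ ≤ 4 * a) (hra : r ≤ 4 * a) :
    gaussMeasure n (ball x r) ≤
      ENNReal.ofReal (Real.exp (8*a + 8*a^2) * (72*(1+5*a))^n) * gaussMeasure n (ball z ρ) := by
  have hr0 : 0 < r := by rw [hrρ]; positivity
  set cd : ℝ := (2 * Real.pi) ^ (-(n : ℝ) / 2) with hcd
  have hcd0 : 0 < cd := Real.rpow_pos_of_pos (by positivity) _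
  set K₁ : ℝ := cd * Real.exp ((2*r*‖x‖ - ‖x‖^2) / 2) with hK₁
  set K₂ : ℝ := cd * Real.exp (-(‖x‖^2 + 2*r*‖x‖ + r^2) / 2) with hK₂
  -- upper bound for gaussMeasure of ball x r
  have hup : gaussMeasure n (ball x r) ≤ ENNReal.ofReal K₁ * volume (ball x r) := by
    rw [gaussMeasure, withDensity_apply _ measurableSet_ball]
    calc ∫⁻ w in ball x r, ENNReal.ofReal (cd * Real.exp (-‖w‖ ^ 2 / 2)) ∂volume
        ≤ ∫⁻ _ in ball x r, ENNReal.ofReal K₁ ∂volume := by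
          refine setLIntegral_mono measurable_const (fun w hw => ?_)
          refine ENNReal.ofReal_le_ofReal ?_
          rw [hK₁]
          refine mul_le_mul_of_nonneg_left (Real.exp_le_exp.mpr ?_) hcd0.le
          have h2 : ‖x‖ - ‖w‖ ≤ dist x w := by
            rw [dist_eq_norm]; exact norm_sub_norm_le x w
          have h3 : dist x w < r := by rw [dist_comm]; exact mem_ball.mp hw
          rcases le_total ‖w‖ ‖x‖ with hc | hc
          · nlinarith [norm_nonneg w, norm_nonneg x]
          · nlinarith [mul_self_le_mul_self (norm_nonneg x) hc, norm_nonneg x, hr0]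
      _ = ENNReal.ofReal K₁ * volume (ball x r) := setLIntegral_const _ _
  -- lower bound for gaussMeasure of ball z ρ
  have hlo : ENNReal.ofReal K₂ * volume (ball z ρ) ≤ gaussMeasure n (ball z ρ) := by
    rw [gaussMeasure, withDensity_apply _ measurableSet_ball]
    calc ENNReal.ofReal K₂ * volume (ball z ρ)
        = ∫⁻ _ in ball z ρ, ENNReal.ofReal K₂ ∂volume := (setLIntegral_const _ _).symm
      _ ≤ ∫⁻ w in ball z ρ, ENNReal.ofReal (cd * Real.exp (-‖w‖ ^ 2 / 2)) ∂volume := by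
          refine setLIntegral_mono (by fun_prop) (fun w hw => ?_)
          refine ENNReal.ofReal_le_ofReal ?_
          rw [hK₂]
          refine mul_le_mul_of_nonneg_left (Real.exp_le_exp.mpr ?_) hcd0.le
          have h3 : dist w x < r := mem_ball.mp (hsub hw)
          have h2 : ‖w‖ - ‖x‖ ≤ dist w x := by
            rw [dist_eq_norm]; exact norm_sub_norm_le w x
          have h4 : ‖w‖ ≤ ‖x‖ + r := by linarith
          nlinarith [mul_self_le_mul_self (norm_nonneg w) h4]
  -- volume comparison
  have hvol : volume (ball x r) = ENNReal.ofReal ((72*(1+5*a))^n) * volume (ball z ρ) := by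
    rw [hrρ, Measure.addHaar_ball_mul_of_pos volume x (by positivity) ρ, finrank_euclideanSpace_fin,
      Measure.addHaar_ball_center]
    rw [Measure.addHaar_ball_center volume z]
  -- combine
  have hK₂0 : 0 < K₂ := by positivity
  have hkey : ENNReal.ofReal K₁ * volume (ball x r) =
      ENNReal.ofReal (Real.exp (2*r*‖x‖ + r^2/2)) *
        ((ENNReal.ofReal ((72*(1+5*a))^n)) * (ENNReal.ofReal K₂ * volume (ball z ρ))) := by
    rw [hvol, ← mul_assoc, ← mul_assoc, ← mul_assoc, ← ENNReal.ofReal_mul (by positivity),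
      ← ENNReal.ofReal_mul (by positivity), ← ENNReal.ofReal_mul (by positivity)]
    congr 2
    rw [hK₁, hK₂,
      show (2*r*‖x‖ - ‖x‖^2)/2 = (2*r*‖x‖ + r^2/2) + (-(‖x‖^2+2*r*‖x‖+r^2)/2) by ring,
      Real.exp_add]
    ring
  calc gaussMeasure n (ball x r) ≤ ENNReal.ofReal K₁ * volume (ball x r) := hup
    _ = ENNReal.ofReal (Real.exp (2*r*‖x‖ + r^2/2)) *
        ((ENNReal.ofReal ((72*(1+5*a))^n)) * (ENNReal.ofReal K₂ * volume (ball z ρ))) := hkey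
    _ ≤ ENNReal.ofReal (Real.exp (8*a + 8*a^2)) *
        ((ENNReal.ofReal ((72*(1+5*a))^n)) * gaussMeasure n (ball z ρ)) := by
        refine mul_le_mul ?_ (mul_le_mul_right hlo _) zero_le zero_le
        refine ENNReal.ofReal_le_ofReal (Real.exp_le_exp.mpr ?_)
        nlinarith [norm_nonneg x]
    _ = ENNReal.ofReal (Real.exp (8*a + 8*a^2) * (72*(1+5*a))^n) * gaussMeasure n (ball z ρ) := by
        rw [ENNReal.ofReal_mul (by positivity), mul_assoc]


lemma mfun_pos {n : ℕ} (x : EuclideanSpace ℝ (Fin n)) : 0 < mfun x := by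
  unfold mfun; split
  · norm_num
  · next h => rw [inv_pos]; linarith [not_le.mp h]

lemma mfun_le_one {n : ℕ} (x : EuclideanSpace ℝ (Fin n)) : mfun x ≤ 1 := by
  unfold mfun; split
  · exact le_rfl
  · next h => exact inv_le_one_of_one_le₀ (by linarith [not_le.mp h])

lemma mfun_mul_norm_le_one {n : ℕ} (x : EuclideanSpace ℝ (Fin n)) : mfun x * ‖x‖ ≤ 1 := by
  unfold mfun; split
  · next h => simpa using h
  · next h =>
      have h1 : (0:ℝ) < ‖x‖ := by linarith [not_le.mp h]
      rw [inv_mul_cancel₀ h1.ne']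

lemma mfun_comp {n : ℕ} {x w : EuclideanSpace ℝ (Fin n)} {c : ℝ} (hc : 0 ≤ c)
    (h : dist w x ≤ c * mfun x) : mfun x / (1 + c) ≤ mfun w := by
  have h1 : 0 < mfun x := mfun_pos x
  have h2 : mfun x ≤ 1 := mfun_le_one x
  have h3 : mfun x * ‖x‖ ≤ 1 := mfun_mul_norm_le_one x
  have hw : ‖w‖ ≤ ‖x‖ + c * mfun x := by
    have := norm_sub_norm_le w x
    rw [← dist_eq_norm] at this
    linarith
  by_cases hw1 : ‖w‖ ≤ 1
  · have : mfun w = 1 := if_pos hw1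
    rw [this, div_le_one (by linarith)]
    linarith
  · have hmw : mfun w = ‖w‖⁻¹ := if_neg hw1
    have hw2 : (1:ℝ) < ‖w‖ := not_le.mp hw1
    rw [hmw, inv_eq_one_div, div_le_div_iff₀ (by linarith) (by linarith)]
    nlinarith [mul_le_mul_of_nonneg_left hw h1.le, mul_le_mul_of_nonneg_left h2 (mul_nonneg hc h1.le)]

lemma key_ball {n : ℕ} {a : ℝ} (ha : 0 < a) {F : Set (EuclideanSpace ℝ (Fin n))}
    (hF : F.Nonempty) {x : EuclideanSpace ℝ (Fin n)}
    (hx1 : 0 < Metric.infDist x F) (hx2 : Metric.infDist x F < 2 * a * mfun x) :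
    ∃ z, ball z ((1 + 5*a)⁻¹ * Metric.infDist x F / 36) ⊆
      {w | 0 < Metric.infDist w F ∧ Metric.infDist w F ≤ a * mfun w} ∩
        ball x (2 * Metric.infDist x F) := by
  set r := Metric.infDist x F with hr
  set β : ℝ := (1 + 5*a)⁻¹ with hβ
  have hβ0 : 0 < β := by positivity
  have hβ1 : β ≤ 1 := by
    rw [hβ]
    exact inv_le_one_of_one_le₀ (by linarith)
  have hM0 : 0 < mfun x := mfun_pos x
  have hM1 : mfun x ≤ 1 := mfun_le_one x
  obtain ⟨y, hyF, hxy⟩ : ∃ y ∈ F, dist x y < (1 + β/18) * r := by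
    rw [← Metric.infDist_lt_iff hF]
    nlinarith
  have hrD : r ≤ dist x y := Metric.infDist_le_dist_of_mem hyF
  set t : ℝ := 1 - β/9 with htdef
  have ht0 : 0 ≤ t := by rw [htdef]; linarith
  set z := x + t • (y - x) with hz
  have hzx : dist z x = t * dist x y := by
    rw [hz, dist_eq_norm, add_sub_cancel_left, norm_smul, Real.norm_of_nonneg ht0,
      ← dist_eq_norm, dist_comm]
  have hzy : dist z y = (β/9) * dist x y := by
    have hv : z - y = (β/9) • (x - y) := by
      rw [hz, htdef]
      module
    rw [dist_eq_norm, hv, norm_smul, Real.norm_of_nonneg (by positivity), ← dist_eq_norm]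
  refine ⟨z, fun w hw => ?_⟩
  rw [mem_ball] at hw
  have hup : Metric.infDist w F ≤ dist w z + dist z y :=
    le_trans (Metric.infDist_le_dist_of_mem hyF) (dist_triangle w z y)
  have hlo : r ≤ Metric.infDist w F + dist x w := Metric.infDist_le_infDist_add_dist
  have hxw : dist x w ≤ dist x z + dist z w := dist_triangle x z w
  rw [dist_comm x z] at hxw
  rw [dist_comm z w] at hxw
  -- numeric bounds
  have hD0 : 0 ≤ dist x y := dist_nonneg
  have hzxle : dist z x ≤ (1 - β/18) * r := by
    rw [hzx, htdef]
    nlinarith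
  have hzyle : dist z y ≤ (β/9) * (19/18) * r := by
    rw [hzy]
    nlinarith
  have hwup : Metric.infDist w F < β * r / 4 := by
    nlinarith [hw, hup, hzyle]
  have hwlo : 0 < Metric.infDist w F := by
    nlinarith [hw, hlo, hxw, hzxle]
  have hxw2 : dist x w < r := by nlinarith [hw, hxw, hzxle]
  have hwx5 : dist w x ≤ 5 * a * mfun x := by
    rw [dist_comm]; nlinarith
  have hmw : mfun x * β ≤ mfun w := by
    have := mfun_comp (by positivity : (0:ℝ) ≤ 5*a) hwx5
    rw [div_eq_mul_inv, ← hβ] at this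
    exact this
  refine ⟨⟨hwlo, ?_⟩, ?_⟩
  · nlinarith
  · rw [mem_ball]
    rw [dist_comm]
    nlinarith



/-- `γ(O') ≤ C γ(O)` with `C` depending only on `a` and `n`. -/
theorem gaussian_measure_Oprime_le (n : ℕ) (a : ℝ) (ha : 0 < a) :
    ∃ C > (0 : ℝ), ∀ F : Set (EuclideanSpace ℝ (Fin n)), F.Nonempty →
      gaussMeasure n {x | 0 < infDist x F ∧ infDist x F < 2 * a * mfun x} ≤
        ENNReal.ofReal C *
          gaussMeasure n {x | 0 < infDist x F ∧ infDist x F ≤ a * mfun x} := by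
  obtain ⟨N, τ, hτ, hN⟩ :=
    HasBesicovitchCovering.no_satelliteConfig (α := EuclideanSpace ℝ (Fin n))
  set C₀ : ℝ := Real.exp (8*a + 8*a^2) * (72*(1+5*a))^n with hC₀
  have hC₀0 : 0 < C₀ := by positivity
  refine ⟨(N+1) * C₀, by positivity, fun F hF => ?_⟩
  set O' : Set (EuclideanSpace ℝ (Fin n)) :=
    {x | 0 < infDist x F ∧ infDist x F < 2 * a * mfun x} with hO'
  set O : Set (EuclideanSpace ℝ (Fin n)) :=
    {x | 0 < infDist x F ∧ infDist x F ≤ a * mfun x} with hO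
  let pkg : Besicovitch.BallPackage O' (EuclideanSpace ℝ (Fin n)) :=
    { c := fun b => (b : EuclideanSpace ℝ (Fin n))
      r := fun b => 2 * infDist (b : EuclideanSpace ℝ (Fin n)) F
      rpos := fun b => by
        have := b.2.1
        show 0 < 2 * infDist (b : EuclideanSpace ℝ (Fin n)) F
        linarith
      r_bound := 4 * a
      r_le := fun b => by
        have h1 := b.2.2
        have h2 := mfun_le_one (b : EuclideanSpace ℝ (Fin n))
        have h3 := mfun_pos (b : EuclideanSpace ℝ (Fin n))
        show 2 * infDist (b : EuclideanSpace ℝ (Fin n)) F ≤ 4 * a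
        nlinarith }
  obtain ⟨s, hs, hcov⟩ := Besicovitch.exist_disjoint_covering_families hτ hN pkg
  choose z hz using fun b : O' => key_ball ha hF b.2.1 b.2.2
  set ρ : O' → ℝ := fun b => (1 + 5*a)⁻¹ * infDist (b : EuclideanSpace ℝ (Fin n)) F / 36 with hρdef
  have hρ0 : ∀ b : O', 0 < ρ b := fun b => by
    have := b.2.1; rw [hρdef]; positivity
  -- each covering ball is controlled by its good subball
  have hctrl : ∀ b : O',
      gaussMeasure n (ball (pkg.c b) (pkg.r b)) ≤
        ENNReal.ofReal C₀ * gaussMeasure n (ball (z b) (ρ b)) := by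
    intro b
    have hd1 : 0 < infDist (b : EuclideanSpace ℝ (Fin n)) F := b.2.1
    have hd2 : infDist (b : EuclideanSpace ℝ (Fin n)) F <
        2 * a * mfun (b : EuclideanSpace ℝ (Fin n)) := b.2.2
    have h2 := mfun_le_one (b : EuclideanSpace ℝ (Fin n))
    have h3 := mfun_mul_norm_le_one (b : EuclideanSpace ℝ (Fin n))
    have h4 := norm_nonneg (b : EuclideanSpace ℝ (Fin n))
    refine gaussMeasure_ball_le ha _ _ (hρ0 b) ?_ ?_ ?_ ?_
    · rw [hρdef]
      have : (1 + 5*a) ≠ 0 := by positivity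
      field_simp
      ring
    · exact (hz b).trans inter_subset_right
    · show 2 * infDist (b : EuclideanSpace ℝ (Fin n)) F * ‖(b : EuclideanSpace ℝ (Fin n))‖ ≤ 4 * a
      nlinarith [mul_le_mul_of_nonneg_right hd2.le h4,
        mul_le_mul_of_nonneg_left h3 (show (0:ℝ) ≤ 2*a by linarith)]
    · show 2 * infDist (b : EuclideanSpace ℝ (Fin n)) F ≤ 4 * a
      nlinarith
  -- the good balls inside one family are pairwise disjoint
  have hgood_sub : ∀ b : O', ball (z b) (ρ b) ⊆ closedBall (pkg.c b) (pkg.r b) :=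
    fun b => ((hz b).trans inter_subset_right).trans ball_subset_closedBall
  have hcnt : ∀ i : Fin N, (s i).Countable := by
    intro i
    refine ((hs i).mono (fun j => ball_subset_closedBall)).countable_of_isOpen
      (fun j _ => isOpen_ball) (fun j _ => ?_)
    exact (nonempty_ball).mpr (pkg.rpos j)
  have hdisj : ∀ i : Fin N, (s i).PairwiseDisjoint fun b => ball (z b) (ρ b) :=
    fun i => (hs i).mono hgood_sub
  -- main estimate
  have hsub : O' ⊆ ⋃ i : Fin N, ⋃ j ∈ s i, ball (pkg.c j) (pkg.r j) := by
    intro x hx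
    exact hcov ⟨⟨x, hx⟩, rfl⟩
  calc gaussMeasure n O'
      ≤ gaussMeasure n (⋃ i : Fin N, ⋃ j ∈ s i, ball (pkg.c j) (pkg.r j)) :=
        measure_mono hsub
    _ ≤ ∑ i : Fin N, gaussMeasure n (⋃ j ∈ s i, ball (pkg.c j) (pkg.r j)) :=
        measure_iUnion_fintype_le _ _
    _ ≤ ∑ i : Fin N, ENNReal.ofReal C₀ * gaussMeasure n O := by
        refine Finset.sum_le_sum fun i _ => ?_
        calc gaussMeasure n (⋃ j ∈ s i, ball (pkg.c j) (pkg.r j))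
            ≤ ∑' j : s i, gaussMeasure n (ball (pkg.c j) (pkg.r j)) :=
              measure_biUnion_le _ (hcnt i) _
          _ ≤ ∑' j : s i, ENNReal.ofReal C₀ * gaussMeasure n (ball (z j) (ρ j)) :=
              ENNReal.tsum_le_tsum fun j => hctrl j
          _ = ENNReal.ofReal C₀ * ∑' j : s i, gaussMeasure n (ball (z j) (ρ j)) :=
              ENNReal.tsum_mul_left
          _ = ENNReal.ofReal C₀ * gaussMeasure n (⋃ j ∈ s i, ball (z j) (ρ j)) := by
              rw [measure_biUnion (hcnt i) (hdisj i) (fun j _ => measurableSet_ball)]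
          _ ≤ ENNReal.ofReal C₀ * gaussMeasure n O := by
              refine mul_le_mul_right (measure_mono ?_) _
              refine iUnion₂_subset fun j _ => ?_
              exact (hz j).trans inter_subset_left
    _ = (N : ℝ≥0∞) * (ENNReal.ofReal C₀ * gaussMeasure n O) := by
        rw [Finset.sum_const, Finset.card_univ, Fintype.card_fin, nsmul_eq_mul]
    _ ≤ ENNReal.ofReal ((N+1) * C₀) * gaussMeasure n O := by
        rw [← mul_assoc]
        refine mul_le_mul_left ?_ _
        calc (N : ℝ≥0∞) * ENNReal.ofReal C₀ = ENNReal.ofReal (N * C₀) := by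
              rw [ENNReal.ofReal_mul (Nat.cast_nonneg N), ENNReal.ofReal_natCast]
          _ ≤ ENNReal.ofReal ((N+1) * C₀) := ENNReal.ofReal_le_ofReal
              (by nlinarith [hC₀0, (Nat.cast_nonneg N : (0:ℝ) ≤ (N:ℝ))])


end
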